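/- Let M > 0, 0 ≤ a < M, r_+ = M + √(M²-a²). Then A_max = (5M² - a² + 3M√(M²-a²)) / (24M(M²-a²)) is strictly increasing in a on [0, M) and tends to +∞ as a → M⁻, and A_max = 1/(3M) when a = 0. -/

import Mathlib

open Real Set Filter

/-- `A_max(a) = (5M² - a² + 3M√(M²-a²)) / (24M(M²-a²))` is strictly increasing in `a`
on `[0, M)`, tends to `+∞` as `a → M⁻`, and equals `1/(3M)` at `a = 0`. -/
theorem Amax_monotone_divergent (M : ℝ) (hM : 0 < M) :
    let Amax : ℝ → ℝ := fun a =>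
      (5 * M ^ 2 - a ^ 2 + 3 * M * Real.sqrt (M ^ 2 - a ^ 2)) / (24 * M * (M ^ 2 - a ^ 2))
    StrictMonoOn Amax (Ico 0 M) ∧
      Tendsto Amax (nhdsWithin M (Iio M)) atTop ∧
      Amax 0 = 1 / (3 * M) := by
  intro Amax
  refine ⟨?_, ?_, ?_⟩
  · intro a₁ h₁ a₂ h₂ h12
    obtain ⟨h1l, h1u⟩ := h₁
    obtain ⟨h2l, h2u⟩ := h₂
    have hd1 : 0 < M ^ 2 - a₁ ^ 2 := by nlinarith
    have hd2 : 0 < M ^ 2 - a₂ ^ 2 := by nlinarith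
    set s₁ := Real.sqrt (M ^ 2 - a₁ ^ 2) with hs₁
    set s₂ := Real.sqrt (M ^ 2 - a₂ ^ 2) with hs₂
    have hs1p : 0 < s₁ := Real.sqrt_pos.2 hd1
    have hs2p : 0 < s₂ := Real.sqrt_pos.2 hd2
    have hsq1 : s₁ ^ 2 = M ^ 2 - a₁ ^ 2 := Real.sq_sqrt hd1.le
    have hsq2 : s₂ ^ 2 = M ^ 2 - a₂ ^ 2 := Real.sq_sqrt hd2.le
    have hlt : s₂ < s₁ := by
      rw [hs₁, hs₂]
      apply Real.sqrt_lt_sqrt hd2.le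
      nlinarith
    show (5 * M ^ 2 - a₁ ^ 2 + 3 * M * s₁) / (24 * M * (M ^ 2 - a₁ ^ 2)) <
        (5 * M ^ 2 - a₂ ^ 2 + 3 * M * s₂) / (24 * M * (M ^ 2 - a₂ ^ 2))
    rw [show (5 * M ^ 2 - a₁ ^ 2 : ℝ) = 4 * M ^ 2 + s₁ ^ 2 by linarith,
      show (5 * M ^ 2 - a₂ ^ 2 : ℝ) = 4 * M ^ 2 + s₂ ^ 2 by linarith,
      show (M ^ 2 - a₁ ^ 2 : ℝ) = s₁ ^ 2 from hsq1.symm,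
      show (M ^ 2 - a₂ ^ 2 : ℝ) = s₂ ^ 2 from hsq2.symm,
      div_lt_div_iff₀ (by positivity) (by positivity)]
    nlinarith [mul_pos (mul_pos hM (sub_pos.2 hlt)) (mul_pos hs1p hs2p),
      mul_pos (mul_pos (mul_pos hM hM) hM) (mul_pos (sub_pos.2 hlt) (add_pos hs1p hs2p)),
      mul_pos hM (mul_pos (mul_pos hM (sub_pos.2 hlt)) (mul_pos hs1p hs2p))]
  · have hev : ∀ᶠ a in nhdsWithin M (Iio M), 0 < M ^ 2 - a ^ 2 := by
      filter_upwards [self_mem_nhdsWithin,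
        (eventually_gt_nhds hM).filter_mono nhdsWithin_le_nhds] with a ha hpos
      simp only [mem_Iio] at ha
      nlinarith
    have h0 : Tendsto (fun a : ℝ => M ^ 2 - a ^ 2) (nhdsWithin M (Iio M)) (nhdsWithin 0 (Ioi 0)) := by
      apply tendsto_nhdsWithin_of_tendsto_nhds_of_eventually_within
      · have h : Continuous (fun a : ℝ => M ^ 2 - a ^ 2) := by continuity
        have := (h.tendsto M).mono_left (nhdsWithin_le_nhds (s := Iio M))
        simpa using this
      · filter_upwards [hev] with a ha using ha
    have h1 : Tendsto (fun a : ℝ => M / (6 * (M ^ 2 - a ^ 2))) (nhdsWithin M (Iio M)) atTop := by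
      have hc : Tendsto (fun x : ℝ => (M / 6) * x⁻¹) (nhdsWithin 0 (Ioi 0)) atTop :=
        Tendsto.const_mul_atTop (by positivity) tendsto_inv_nhdsGT_zero
      have := hc.comp h0
      refine this.congr fun a => ?_
      simp only [Function.comp_apply]
      rw [div_mul_eq_mul_div, ← div_eq_mul_inv, div_div, mul_comm (M ^ 2 - a ^ 2) 6]
    apply tendsto_atTop_mono' _ _ h1
    filter_upwards [hev] with a ha
    have hs : 0 ≤ Real.sqrt (M ^ 2 - a ^ 2) := Real.sqrt_nonneg _
    show M / (6 * (M ^ 2 - a ^ 2)) ≤ _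
    rw [show M / (6 * (M ^ 2 - a ^ 2)) = (4 * M ^ 2) / (24 * M * (M ^ 2 - a ^ 2)) by
      field_simp; ring]
    rw [div_le_div_iff₀ (by positivity) (by positivity)]
    nlinarith [mul_pos ha (by positivity : (0:ℝ) < 24 * M * (M ^ 2 - a ^ 2)),
      mul_nonneg (mul_nonneg hM.le hs) (by positivity : (0:ℝ) ≤ 24 * M * (M ^ 2 - a ^ 2))]
  · show (5 * M ^ 2 - 0 ^ 2 + 3 * M * Real.sqrt (M ^ 2 - 0 ^ 2)) / (24 * M * (M ^ 2 - 0 ^ 2)) = _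
    rw [show M ^ 2 - 0 ^ 2 = M ^ 2 by ring, Real.sqrt_sq hM.le]
    field_simp
    ring
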